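/- Let G=(V,E) be a finite simple graph on n vertices with boundary set ∂V ⊆ V, let v_1,…,v_n be an enumeration of V, let f : V → ℝ be a nonnegative function with f(v_1)² ≤ f(v_2)² ≤ … ≤ f(v_n)², and set S_i = {v_1,…,v_i}. Then Σ_{u∼v} |f_u² − f_v²| − (1/2)·Σ_{u∼v, u,v∈∂V} |f_u² − f_v²| ≥ Σ_{i=1}^{n−1} |f(v_i)² − f(v_{i+1})²|·m(S_i, V∖S_i), where each sum over u ∼ v counts each edge exactly once. -/

import Mathlib

open Matrix Finset

namespace RN

variable {V : Type*}

/-- `|E(U,W)|`: the number of edges of `G` with one endpoint in `U` and one in `W`. -/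
def ecount [Fintype V] [DecidableEq V] (G : SimpleGraph V) [DecidableRel G.Adj]
    (U W : Finset V) : ℕ :=
  (G.edgeFinset.filter fun e => ∃ u ∈ U, ∃ w ∈ W, e = s(u, w)).card

/-- The measure `m(U,W) = |E(U,W)| - (1/2)|E(U ∩ ∂V, W ∩ ∂V)|`, where `B = ∂V`. -/
noncomputable def mMeas [Fintype V] [DecidableEq V] (G : SimpleGraph V) [DecidableRel G.Adj]
    (B : Finset V) (U W : Finset V) : ℝ :=
  (ecount G U W : ℝ) - (1/2) * (ecount G (U ∩ B) (W ∩ B) : ℝ)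

end RN

open RN

private def crossB {n : ℕ} (i : ℕ) : Sym2 (Fin n) → Bool :=
  Sym2.lift ⟨fun u v => decide ((u.1 ≤ i ∧ i < v.1) ∨ (v.1 ≤ i ∧ i < u.1)), by
    intro u v; simp only [decide_eq_decide]; exact or_comm⟩

/-- For a graph on `n` vertices `v_0, …, v_{n-1}` with boundary `B`, and a nonnegative
function `f` whose squares are nondecreasing along the enumeration, summing over each edge
exactly once (and with `S_i = {v_0, …, v_i}`):
`Σ_{u∼v} |f_u² − f_v²| − (1/2)·Σ_{u∼v, u,v∈∂V} |f_u² − f_v²|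
  ≥ Σ_i |f(v_i)² − f(v_{i+1})²| · m(S_i, V∖S_i)`. -/
theorem sum_abs_sq_diff_ge_cut_sum {n : ℕ} (G : SimpleGraph (Fin n)) [DecidableRel G.Adj]
    (B : Finset (Fin n)) (f : Fin n → ℝ) (hf0 : ∀ v, 0 ≤ f v)
    (hmono : ∀ i j : Fin n, i ≤ j → (f i) ^ 2 ≤ (f j) ^ 2) :
    (∑ e ∈ G.edgeFinset,
        Sym2.lift ⟨fun u v => |(f u) ^ 2 - (f v) ^ 2|, fun u v => abs_sub_comm _ _⟩ e)
      - (1/2) * (∑ e ∈ G.edgeFinset ∩ B.sym2,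
          Sym2.lift ⟨fun u v => |(f u) ^ 2 - (f v) ^ 2|, fun u v => abs_sub_comm _ _⟩ e)
    ≥ ∑ i : Fin (n - 1),
        |(f ⟨i.1, by have := i.isLt; omega⟩) ^ 2 - (f ⟨i.1 + 1, by have := i.isLt; omega⟩) ^ 2|
          * mMeas G B (Finset.univ.filter fun v => v.1 ≤ i.1)
              (Finset.univ.filter fun v => v.1 ≤ i.1)ᶜ := by
  
  classical
  rcases n with _ | m
  · have he : G.edgeFinset = ∅ := Finset.eq_empty_of_isEmpty _
    simp [he]
  set sq : ℕ → ℝ := fun k => f ⟨min k m, by omega⟩ ^ 2 with hsqdef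
  have hsqf : ∀ u : Fin (m+1), f u ^ 2 = sq u.1 := by
    intro u
    have : (⟨min u.1 m, by omega⟩ : Fin (m+1)) = u := by
      apply Fin.ext; simp; omega
    simp only [hsqdef, this]
  have hsqmono : ∀ a b : ℕ, a ≤ b → sq a ≤ sq b := by
    intro a b hab
    exact hmono _ _ (by simp [Fin.le_def]; omega)
  -- telescoping, ordered case
  have ordered : ∀ u v : Fin (m+1), u.1 ≤ v.1 →
      |f u ^ 2 - f v ^ 2| =
        ∑ i ∈ Finset.range m, (if crossB i s(u,v) = true then sq (i+1) - sq i else 0) := by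
    intro u v huv
    have h1 : ∀ i ∈ Finset.range m,
        (if crossB i s(u,v) = true then sq (i+1) - sq i else 0)
          = (if u.1 ≤ i ∧ i < v.1 then sq (i+1) - sq i else 0) := by
      intro i _
      have hc : (crossB i s(u,v) = true) ↔ (u.1 ≤ i ∧ i < v.1) := by
        simp only [crossB, Sym2.lift_mk, decide_eq_true_eq]
        omega
      simp only [hc]
    rw [Finset.sum_congr rfl h1, ← Finset.sum_filter]
    have h2 : Finset.filter (fun i => u.1 ≤ i ∧ i < v.1) (Finset.range m) =
        Finset.Ico u.1 v.1 := by
      ext x; simp [Finset.mem_Ico, Finset.mem_range]; omega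
    rw [h2, Finset.sum_Ico_eq_sub _ huv, Finset.sum_range_sub, Finset.sum_range_sub,
      hsqf u, hsqf v, abs_sub_comm, abs_of_nonneg (sub_nonneg.2 (hsqmono _ _ huv))]
    ring
  have key : ∀ u v : Fin (m+1),
      |f u ^ 2 - f v ^ 2| =
        ∑ i ∈ Finset.range m, (if crossB i s(u,v) = true then sq (i+1) - sq i else 0) := by
    intro u v
    rcases le_total u.1 v.1 with h | h
    · exact ordered u v h
    · rw [abs_sub_comm, Sym2.eq_swap]; exact ordered v u h
  have keyE : ∀ e : Sym2 (Fin (m+1)),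
      Sym2.lift ⟨fun u v => |(f u) ^ 2 - (f v) ^ 2|, fun u v => abs_sub_comm _ _⟩ e =
        ∑ i ∈ Finset.range m, (if crossB i e = true then sq (i+1) - sq i else 0) := by
    refine Sym2.ind (fun u v => ?_)
    rw [Sym2.lift_mk]
    exact key u v
  set S : ℕ → Finset (Fin (m+1)) := fun i => Finset.univ.filter (fun v => v.1 ≤ i) with hS
  -- counting lemmas
  have hcount1 : ∀ i : ℕ,
      (ecount G (S i) (S i)ᶜ) = (G.edgeFinset.filter fun e => crossB i e = true).card := by
    intro i
    unfold ecount
    congr 1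
    ext e
    simp only [Finset.mem_filter]
    refine and_congr_right ?_
    revert e
    intro e he
    revert he
    refine Sym2.ind (fun a b => ?_) e
    intro he
    simp only [hS, Finset.mem_filter, Finset.mem_univ, true_and, Finset.mem_compl, not_le,
      crossB, Sym2.lift_mk, decide_eq_true_eq]
    constructor
    · rintro ⟨u, hu, w, hw, heq⟩
      rw [Sym2.eq_iff] at heq
      rcases heq with ⟨rfl, rfl⟩ | ⟨rfl, rfl⟩ <;> omega
    · rintro (⟨h1, h2⟩ | ⟨h1, h2⟩)
      · exact ⟨a, h1, b, h2, rfl⟩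
      · exact ⟨b, h1, a, h2, Sym2.eq_swap.symm⟩
  have hcount2 : ∀ i : ℕ,
      (ecount G (S i ∩ B) ((S i)ᶜ ∩ B)) =
        ((G.edgeFinset ∩ B.sym2).filter fun e => crossB i e = true).card := by
    intro i
    unfold ecount
    congr 1
    ext e
    simp only [Finset.mem_filter, Finset.mem_inter]
    constructor
    · rintro ⟨he, hP⟩
      revert hP
      refine Sym2.ind (fun a b he => ?_) e he
      rintro ⟨u, hu, w, hw, heq⟩
      simp only [hS, Finset.mem_inter, Finset.mem_filter, Finset.mem_univ, true_and,
        Finset.mem_compl, not_le] at hu hw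
      rw [Sym2.eq_iff] at heq
      refine ⟨⟨he, ?_⟩, ?_⟩
      · rw [Finset.mk_mem_sym2_iff]
        rcases heq with ⟨rfl, rfl⟩ | ⟨rfl, rfl⟩ <;> exact ⟨by tauto, by tauto⟩
      · simp only [crossB, Sym2.lift_mk, decide_eq_true_eq]
        rcases heq with ⟨rfl, rfl⟩ | ⟨rfl, rfl⟩ <;> omega
    · rintro ⟨⟨he, hB⟩, hX⟩
      refine ⟨he, ?_⟩
      revert hB hX
      refine Sym2.ind (fun a b => ?_) e
      intro hX hB
      rw [Finset.mk_mem_sym2_iff] at hB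
      simp only [crossB, Sym2.lift_mk, decide_eq_true_eq] at hX
      simp only [hS, Finset.mem_inter, Finset.mem_filter, Finset.mem_univ, true_and,
        Finset.mem_compl, not_le]
      rcases hX with ⟨h1, h2⟩ | ⟨h1, h2⟩
      · exact ⟨a, ⟨h1, hB.1⟩, b, ⟨h2, hB.2⟩, rfl⟩
      · exact ⟨b, ⟨h1, hB.2⟩, a, ⟨h2, hB.1⟩, Sym2.eq_swap.symm⟩
  -- rewrite the two LHS sums
  have L1 : (∑ e ∈ G.edgeFinset,
      Sym2.lift ⟨fun u v => |(f u) ^ 2 - (f v) ^ 2|, fun u v => abs_sub_comm _ _⟩ e) =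
      ∑ i ∈ Finset.range m, (sq (i+1) - sq i) *
        ((G.edgeFinset.filter fun e => crossB i e = true).card : ℝ) := by
    rw [Finset.sum_congr rfl fun e _ => keyE e, Finset.sum_comm]
    refine Finset.sum_congr rfl fun i _ => ?_
    rw [← Finset.sum_filter, Finset.sum_const, nsmul_eq_mul, mul_comm]
  have L2 : (∑ e ∈ G.edgeFinset ∩ B.sym2,
      Sym2.lift ⟨fun u v => |(f u) ^ 2 - (f v) ^ 2|, fun u v => abs_sub_comm _ _⟩ e) =
      ∑ i ∈ Finset.range m, (sq (i+1) - sq i) *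
        (((G.edgeFinset ∩ B.sym2).filter fun e => crossB i e = true).card : ℝ) := by
    rw [Finset.sum_congr rfl fun e _ => keyE e, Finset.sum_comm]
    refine Finset.sum_congr rfl fun i _ => ?_
    rw [← Finset.sum_filter, Finset.sum_const, nsmul_eq_mul, mul_comm]
  rw [L1, L2]
  -- rewrite RHS
  have R1 : (∑ i : Fin (m + 1 - 1),
      |(f ⟨i.1, by have := i.isLt; omega⟩) ^ 2 - (f ⟨i.1 + 1, by have := i.isLt; omega⟩) ^ 2|
        * mMeas G B (Finset.univ.filter fun v => v.1 ≤ i.1)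
            (Finset.univ.filter fun v => v.1 ≤ i.1)ᶜ) =
      ∑ i ∈ Finset.range m, (sq (i+1) - sq i) * mMeas G B (S i) (S i)ᶜ := by
    rw [← Fin.sum_univ_eq_sum_range (fun k => (sq (k+1) - sq k) * mMeas G B (S k) (S k)ᶜ) m]
    refine Finset.sum_congr rfl fun i _ => ?_
    congr 1
    rw [hsqf ⟨i.1, by have := i.isLt; omega⟩, hsqf ⟨i.1 + 1, by have := i.isLt; omega⟩]
    rw [abs_sub_comm, abs_of_nonneg (sub_nonneg.2 (hsqmono _ _ (Nat.le_succ _)))]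
  rw [R1]
  apply ge_of_eq
  rw [Finset.mul_sum, ← Finset.sum_sub_distrib]
  refine Finset.sum_congr rfl fun i _ => ?_
  rw [mMeas, hcount1 i, hcount2 i]
  ring
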